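/- Fix real constants m₀ > 0, ħ > 0, λ₀ > 0, a > -1, γ > 1/2, and define for x ≠ 0 the deformed parabose momentum operator (P̃f)(x) = -iħ·(λ₀^a√m₀)⁻¹·( |x|^{-a}·f'(x) - (a/2)·|x|^{-a-2}·x·f(x) - (γ-1/2)·|x|^{-a}·x⁻¹·f(-x) ). Then for every f : ℝ → ℂ twice differentiable on ℝ \ {0} and every x ≠ 0: P̃(P̃f)(x) = -(ħ²/m₀)·λ₀^{-2a}·|x|^{-2a}·( f''(x) - (2a/x)·f'(x) + ( a(3a+2)/4 - (γ-1/2)² )·x⁻²·f(x) + (a+1)·(γ-1/2)·x⁻²·f(-x) ). -/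

import Mathlib

/-- The deformed position operator `(X̃f)(x) = √m₀·λ₀^a·|x|^a·x·f(x)`. -/
noncomputable def Xop (m₀ lam a : ℝ) (f : ℝ → ℂ) (x : ℝ) : ℂ :=
  ((Real.sqrt m₀ * lam ^ a * |x| ^ a * x : ℝ) : ℂ) * f x

/-- The deformed parabose momentum operator
`(P̃f)(x) = -iħ·(λ₀^a√m₀)⁻¹·(|x|^(-a)·f'(x) - (a/2)·|x|^(-a-2)·x·f(x)
  - (γ-1/2)·|x|^(-a)·x⁻¹·f(-x))`. -/
noncomputable def Ppb (hbar m₀ lam a γ : ℝ) (f : ℝ → ℂ) (x : ℝ) : ℂ :=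
  (-Complex.I) * (hbar : ℂ) * (((lam ^ a * Real.sqrt m₀ : ℝ) : ℂ))⁻¹ *
    (((|x| ^ (-a) : ℝ) : ℂ) * deriv f x
      - ((a / 2 : ℝ) : ℂ) * ((|x| ^ (-a - 2) : ℝ) : ℂ) * (x : ℂ) * f x
      - ((γ - 1 / 2 : ℝ) : ℂ) * ((|x| ^ (-a) : ℝ) : ℂ) * (x : ℂ)⁻¹ * f (-x))

lemma habs (c x : ℝ) (hx : x ≠ 0) :
    HasDerivAt (fun y : ℝ => |y| ^ c) (c * |x| ^ c / x) x := by
  rcases lt_or_gt_of_ne hx with h | h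
  · have hx' : (0:ℝ) < -x := by linarith
    have h1 : HasDerivAt (fun y : ℝ => (-y) ^ c) (c * (-x) ^ (c - 1) * (-1)) x := by
      have h2 := (Real.hasDerivAt_rpow_const (x := -x) (p := c)
        (Or.inl hx'.ne')).comp x (hasDerivAt_neg x)
      simpa [Function.comp_def] using h2
    have heq : (fun y : ℝ => |y| ^ c) =ᶠ[nhds x] (fun y : ℝ => (-y) ^ c) := by
      filter_upwards [Iio_mem_nhds h] with y hy
      rw [abs_of_neg hy]
    have h3 := h1.congr_of_eventuallyEq heq
    refine h3.congr_deriv (Eq.symm ?_)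
    rw [abs_of_neg h, Real.rpow_sub hx', Real.rpow_one]
    field_simp
  · have h1 : HasDerivAt (fun y : ℝ => y ^ c) (c * x ^ (c - 1)) x :=
      Real.hasDerivAt_rpow_const (x := x) (p := c) (Or.inl hx)
    have heq : (fun y : ℝ => |y| ^ c) =ᶠ[nhds x] (fun y : ℝ => y ^ c) := by
      filter_upwards [Ioi_mem_nhds h] with y hy
      rw [abs_of_pos hy]
    have h3 := h1.congr_of_eventuallyEq heq
    refine h3.congr_deriv (Eq.symm ?_)
    rw [abs_of_pos h, Real.rpow_sub h, Real.rpow_one]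
    field_simp


set_option maxHeartbeats 1000000 in
/-- expansion of the squared parabose momentum operator:
`P̃(P̃f)(x) = -(ħ²/m₀)·λ₀^(-2a)·|x|^(-2a)·( f''(x) - (2a/x)·f'(x)
  + (a(3a+2)/4 - (γ-1/2)²)·x⁻²·f(x) + (a+1)(γ-1/2)·x⁻²·f(-x) )` at every `x ≠ 0`. -/
theorem stmt14 (m₀ hbar lam a γ : ℝ) (hm₀ : 0 < m₀) (hhb : 0 < hbar) (hlam : 0 < lam)
    (ha : -1 < a) (hγ : 1 / 2 < γ)
    (f : ℝ → ℂ)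
    (hf : ∀ y : ℝ, y ≠ 0 → DifferentiableAt ℝ f y)
    (hf' : ∀ y : ℝ, y ≠ 0 → DifferentiableAt ℝ (deriv f) y)
    (x : ℝ) (hx : x ≠ 0) :
    Ppb hbar m₀ lam a γ (Ppb hbar m₀ lam a γ f) x
      = -((hbar ^ 2 / m₀ : ℝ) : ℂ) * ((lam ^ (-(2 * a)) : ℝ) : ℂ)
          * ((|x| ^ (-(2 * a)) : ℝ) : ℂ) *
          (deriv (deriv f) x - ((2 * a : ℝ) : ℂ) / (x : ℂ) * deriv f x
            + ((a * (3 * a + 2) / 4 - (γ - 1 / 2) ^ 2 : ℝ) : ℂ) * ((x : ℂ) ^ 2)⁻¹ * f x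
            + (((a + 1) * (γ - 1 / 2) : ℝ) : ℂ) * ((x : ℂ) ^ 2)⁻¹ * f (-x)) := by
  have hxn : -x ≠ 0 := neg_ne_zero.2 hx
  have hxC : (x:ℂ) ≠ 0 := by exact_mod_cast hx
  have hA : HasDerivAt (fun y : ℝ => ((|y| ^ (-a) : ℝ) : ℂ))
      ((-a * |x| ^ (-a) / x : ℝ) : ℂ) x := (habs (-a) x hx).ofReal_comp
  have hA2 : HasDerivAt (fun y : ℝ => ((|y| ^ (-a - 2) : ℝ) : ℂ))
      (((-a - 2) * |x| ^ (-a - 2) / x : ℝ) : ℂ) x := (habs (-a - 2) x hx).ofReal_comp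
  have hid : HasDerivAt (fun y : ℝ => (y : ℂ)) 1 x := by
    simpa using (hasDerivAt_id x).ofReal_comp
  have hinv : HasDerivAt (fun y : ℝ => ((y:ℂ))⁻¹) (-((x:ℂ)^2)⁻¹) x :=
    (hasDerivAt_inv hxC).comp_ofReal
  have hf1 : HasDerivAt f (deriv f x) x := (hf x hx).hasDerivAt
  have hf2 : HasDerivAt (deriv f) (deriv (deriv f) x) x := (hf' x hx).hasDerivAt
  have hfn : HasDerivAt (fun y => f (-y)) (-(deriv f (-x))) x := by
    have := HasDerivAt.scomp x (hf (-x) hxn).hasDerivAt (hasDerivAt_neg x)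
    simpa [Function.comp_def] using this
  have hg := ((((hA.mul hf2).sub
      (((hA2.const_mul ((a/2:ℝ):ℂ)).mul hid).mul hf1)).sub
      (((hA.const_mul ((γ-1/2:ℝ):ℂ)).mul hinv).mul hfn)).const_mul
      ((-Complex.I) * (hbar : ℂ) * (((lam ^ a * Real.sqrt m₀ : ℝ) : ℂ))⁻¹))
  have hg' : HasDerivAt (Ppb hbar m₀ lam a γ f) _ x := hg
  simp only [Ppb]
  rw [hg'.deriv]
  simp only [abs_neg, neg_neg, inv_neg, Pi.mul_apply]
  have e1r : |x| ^ (-a - 2) = |x| ^ (-a) * (x ^ 2)⁻¹ := by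
    rw [show -a - 2 = -a + -((2:ℕ):ℝ) by push_cast; ring, Real.rpow_add (abs_pos.2 hx)]
    congr 1
    rw [Real.rpow_neg (abs_nonneg x), Real.rpow_natCast, sq_abs]
  have e2r : |x| ^ (-(2 * a)) = (|x| ^ (-a)) ^ 2 := by
    rw [show -(2 * a) = (-a) * ((2:ℕ):ℝ) by push_cast; ring,
      Real.rpow_mul (abs_nonneg x), Real.rpow_natCast]
  have e3r : lam ^ (-(2 * a)) = ((lam ^ a) ^ 2)⁻¹ := by
    rw [show -(2 * a) = -(a * ((2:ℕ):ℝ)) by push_cast; ring, Real.rpow_neg hlam.le,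
      Real.rpow_mul hlam.le, Real.rpow_natCast]
  have e1C : ((|x| ^ (-a - 2) : ℝ) : ℂ) = ((|x| ^ (-a) : ℝ) : ℂ) * ((x:ℂ) ^ 2)⁻¹ := by
    rw [e1r]; push_cast; ring
  have e2C : ((|x| ^ (-(2 * a)) : ℝ) : ℂ) = ((|x| ^ (-a) : ℝ) : ℂ) ^ 2 := by
    rw [e2r]; push_cast; ring
  have e3C : ((lam ^ (-(2 * a)) : ℝ) : ℂ) = (((lam ^ a : ℝ) : ℂ) ^ 2)⁻¹ := by
    rw [e3r]; push_cast; ring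
  have hmC : (m₀ : ℂ) = ((Real.sqrt m₀ : ℝ) : ℂ) ^ 2 := by
    rw [← Complex.ofReal_pow, Real.sq_sqrt hm₀.le]
  have hsC : ((lam ^ a : ℝ) : ℂ) ≠ 0 := by
    exact_mod_cast (Real.rpow_pos_of_pos hlam a).ne'
  have hrC : ((Real.sqrt m₀ : ℝ) : ℂ) ≠ 0 := by
    exact_mod_cast (Real.sqrt_pos.2 hm₀).ne'
  push_cast
  rw [e1C, e2C, e3C, hmC]
  have hfac : ∀ t A B D E1 E2 E3 : ℂ,
      t * (A * (t * E1) - B * (t * E2) - D * (t * E3))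
        = t ^ 2 * (A * E1 - B * E2 - D * E3) := by intros; ring
  rw [hfac]
  have ht2 : (-Complex.I * (hbar:ℂ) * (((lam ^ a : ℝ):ℂ) * ((Real.sqrt m₀ : ℝ):ℂ))⁻¹) ^ 2
      = -((hbar:ℂ) ^ 2 * ((((lam ^ a : ℝ):ℂ) * ((Real.sqrt m₀ : ℝ):ℂ))⁻¹) ^ 2) := by
    ring_nf
    rw [Complex.I_sq]
    ring
  rw [ht2]
  have hw : (x:ℂ) * ((x:ℝ):ℂ)⁻¹ = 1 := mul_inv_cancel₀ hxC
  linear_combination (((hbar:ℝ):ℂ) ^ 2 * ((|x| ^ (-a) : ℝ):ℂ) ^ 2 * (((lam ^ a : ℝ):ℂ))⁻¹ ^ 2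
        * (((Real.sqrt m₀ : ℝ):ℂ))⁻¹ ^ 2 * ((x:ℂ))⁻¹ * (a:ℂ) * deriv f x
    - ((hbar:ℝ):ℂ) ^ 2 * ((|x| ^ (-a) : ℝ):ℂ) ^ 2 * (((lam ^ a : ℝ):ℂ))⁻¹ ^ 2
        * (((Real.sqrt m₀ : ℝ):ℂ))⁻¹ ^ 2 * ((x:ℂ))⁻¹ ^ 2 * (a:ℂ) * f x
    - (3/4 : ℂ) * ((hbar:ℝ):ℂ) ^ 2 * ((|x| ^ (-a) : ℝ):ℂ) ^ 2 * (((lam ^ a : ℝ):ℂ))⁻¹ ^ 2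
        * (((Real.sqrt m₀ : ℝ):ℂ))⁻¹ ^ 2 * ((x:ℂ))⁻¹ ^ 2 * (a:ℂ) ^ 2 * f x
    - (1/4 : ℂ) * ((hbar:ℝ):ℂ) ^ 2 * ((|x| ^ (-a) : ℝ):ℂ) ^ 2 * (((lam ^ a : ℝ):ℂ))⁻¹ ^ 2
        * (((Real.sqrt m₀ : ℝ):ℂ))⁻¹ ^ 2 * (x:ℂ) * ((x:ℂ))⁻¹ ^ 3 * (a:ℂ) ^ 2 * f x) * hw
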